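/- Let σ denote Kubota's 2-cocycle on SL₂(ℚ₂), and let 𝒩 be the set of matrices (a b; c d) ∈ SL₂(ℚ₂) with a − 1 ∈ 8ℤ₂, d − 1 ∈ 8ℤ₂, b ∈ 4ℤ₂ and c ∈ 8ℤ₂. Then σ(v, v′) = 1 for all v, v′ ∈ 𝒩; that is, the trivial section v ↦ ⟨v, 1⟩ is a group homomorphism from 𝒩 into the metaplectic double cover of SL₂(ℚ₂). -/

import Mathlib

open scoped Classical

open scoped Classical

open Polynomial in
lemma sq_int (y : ℤ_[2]) : ∃ s : ℤ_[2], s ^ 2 = 1 + 8 * y := by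
  have hnorm : ‖(X ^ 2 - C (1 + 8 * y) : ℤ_[2][X]).eval 1‖ <
      ‖(X ^ 2 - C (1 + 8 * y) : ℤ_[2][X]).derivative.eval 1‖ ^ 2 := by
    have h8 : ((8 : ℤ_[2])) = (2 : ℤ_[2]) ^ 3 := by norm_num
    have h2 : ‖(2 : ℤ_[2])‖ = 2⁻¹ := by
      simpa using PadicInt.norm_p (p := 2)
    simp only [Polynomial.eval_sub, Polynomial.eval_pow, Polynomial.eval_X,
      Polynomial.eval_C, Polynomial.derivative_sub, Polynomial.derivative_C,
      Polynomial.derivative_X_pow, Polynomial.eval_mul, Polynomial.eval_one, sub_zero]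
    have he : (1:ℤ_[2])^2 - (1 + 8*y) = -(8*y) := by ring
    rw [he]
    have hle : ‖-(8*y : ℤ_[2])‖ ≤ (8:ℝ)⁻¹ := by
      rw [norm_neg, h8]
      calc ‖(2:ℤ_[2])^3 * y‖ ≤ ‖(2:ℤ_[2])^3‖ * 1 := by
            refine le_trans (norm_mul_le _ _) ?_
            exact mul_le_mul_of_nonneg_left (PadicInt.norm_le_one y) (norm_nonneg _)
        _ = (8:ℝ)⁻¹ := by rw [mul_one, norm_pow, h2]; norm_num
    have hd : ‖((2:ℕ):ℤ_[2]) * 1^(2-1)‖^2 = (4:ℝ)⁻¹ := by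
      push_cast
      rw [one_pow, mul_one, h2]; norm_num
    calc ‖-(8*y:ℤ_[2])‖ ≤ (8:ℝ)⁻¹ := hle
      _ < (4:ℝ)⁻¹ := by norm_num
      _ = _ := hd.symm
  obtain ⟨z, hz, -⟩ := hensels_lemma hnorm
  refine ⟨z, ?_⟩
  rw [Polynomial.aeval_def, Polynomial.eval₂_eq_eval_map, Algebra.algebraMap_self, Polynomial.map_id] at hz
  simp only [Polynomial.eval_sub, Polynomial.eval_pow, Polynomial.eval_X,
    Polynomial.eval_C, sub_eq_zero] at hz
  exact hz

lemma sq_rat (w : ℚ_[2]) (y : ℤ_[2]) (h : w - 1 = 8 * (y : ℚ_[2])) :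
    ∃ s : ℚ_[2], s ^ 2 = w ∧ w ≠ 0 := by
  obtain ⟨s, hs⟩ := sq_int y
  have h8c : ((8 : ℤ_[2]) : ℚ_[2]) = 8 := map_ofNat (PadicInt.Coe.ringHom) 8
  have hw : w = ((1 + 8 * y : ℤ_[2]) : ℚ_[2]) := by push_cast [h8c]; linear_combination h
  refine ⟨(s : ℚ_[2]), ?_, ?_⟩
  · rw [hw, ← hs]; push_cast; ring
  · rw [hw]
    have hne : (1 + 8 * y : ℤ_[2]) ≠ 0 := by
      intro h0
      have h1 : (1 : ℤ_[2]) = -(8 * y) := by linear_combination h0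
      have h2 : ‖(1 : ℤ_[2])‖ = ‖(8 * y : ℤ_[2])‖ := by rw [h1, norm_neg]
      have h8 : ((8 : ℤ_[2])) = (2 : ℤ_[2]) ^ 3 := by norm_num
      have hn2 : ‖(2 : ℤ_[2])‖ = 2⁻¹ := by simpa using PadicInt.norm_p (p := 2)
      have hle : ‖(8 * y : ℤ_[2])‖ ≤ (8:ℝ)⁻¹ := by
        rw [h8, norm_mul, norm_pow, hn2]
        calc (2:ℝ)⁻¹^3 * ‖y‖ ≤ 2⁻¹^3 * 1 :=
              mul_le_mul_of_nonneg_left (PadicInt.norm_le_one y) (by positivity)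
          _ = (8:ℝ)⁻¹ := by norm_num
      rw [norm_one] at h2
      rw [← h2] at hle
      norm_num at hle
    exact PadicInt.coe_ne_zero.2 hne

/-- The quadratic Hilbert symbol over `ℚ_p`: `1` if `z² = a·x² + b·y²` has a nonzero
solution, `-1` otherwise. -/
noncomputable def hilbertSym (p : ℕ) [Fact p.Prime] (a b : ℚ_[p]) : ℤ :=
  if ∃ x y z : ℚ_[p], (x, y, z) ≠ (0, 0, 0) ∧ z ^ 2 = a * x ^ 2 + b * y ^ 2 then 1 else -1

/-- Kubota's function `x(g)`: the lower-left entry if nonzero, else the lower-right entry. -/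
noncomputable def kubotaX (p : ℕ) [Fact p.Prime] (g : Matrix (Fin 2) (Fin 2) ℚ_[p]) : ℚ_[p] :=
  if g 1 0 ≠ 0 then g 1 0 else g 1 1

/-- Kubota's 2-cocycle on `SL₂(ℚ_p)`. -/
noncomputable def kubota (p : ℕ) [Fact p.Prime]
    (g g' : Matrix.SpecialLinearGroup (Fin 2) ℚ_[p]) : ℤ :=
  hilbertSym p (kubotaX p ↑(g * g') / kubotaX p ↑g) (kubotaX p ↑(g * g') / kubotaX p ↑g')

/-- The congruence subgroup `𝒩 = {(a b; c d) : a-1, d-1 ∈ 8ℤ₂, b ∈ 4ℤ₂, c ∈ 8ℤ₂}`. -/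
def inN2 (v : Matrix.SpecialLinearGroup (Fin 2) ℚ_[2]) : Prop :=
  (∃ y : ℤ_[2], (v : Matrix (Fin 2) (Fin 2) ℚ_[2]) 0 0 - 1 = 8 * (y : ℚ_[2])) ∧
  (∃ y : ℤ_[2], (v : Matrix (Fin 2) (Fin 2) ℚ_[2]) 1 1 - 1 = 8 * (y : ℚ_[2])) ∧
  (∃ y : ℤ_[2], (v : Matrix (Fin 2) (Fin 2) ℚ_[2]) 0 1 = 4 * (y : ℚ_[2])) ∧
  (∃ y : ℤ_[2], (v : Matrix (Fin 2) (Fin 2) ℚ_[2]) 1 0 = 8 * (y : ℚ_[2]))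

/-- Kubota's cocycle is trivial on the congruence subgroup `𝒩` of `SL₂(ℚ₂)`, i.e. the
trivial section splits the metaplectic double cover over `𝒩`. -/
theorem kubota_cocycle_trivial_on_N_Q2 (v v' : Matrix.SpecialLinearGroup (Fin 2) ℚ_[2])
    (hv : inN2 v) (hv' : inN2 v') : kubota 2 v v' = 1 := by
  obtain ⟨⟨ya, ha⟩, ⟨yd, hd⟩, -, -⟩ := hv
  obtain ⟨⟨ya', ha'⟩, ⟨yd', hd'⟩, -, -⟩ := hv'
  obtain ⟨sa', hsa', ha'0⟩ := sq_rat _ _ ha'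
  obtain ⟨sd, hsd, hd0⟩ := sq_rat _ _ hd
  obtain ⟨sd', hsd', hd'0⟩ := sq_rat _ _ hd'
  have hc'' : ((v * v' : Matrix.SpecialLinearGroup (Fin 2) ℚ_[2]) :
        Matrix (Fin 2) (Fin 2) ℚ_[2]) 1 0 =
      (v : Matrix (Fin 2) (Fin 2) ℚ_[2]) 1 0 * (v' : Matrix (Fin 2) (Fin 2) ℚ_[2]) 0 0 +
      (v : Matrix (Fin 2) (Fin 2) ℚ_[2]) 1 1 * (v' : Matrix (Fin 2) (Fin 2) ℚ_[2]) 1 0 := by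
    simp [Matrix.SpecialLinearGroup.coe_mul, Matrix.mul_apply, Fin.sum_univ_two]
  have hd'' : ((v * v' : Matrix.SpecialLinearGroup (Fin 2) ℚ_[2]) :
        Matrix (Fin 2) (Fin 2) ℚ_[2]) 1 1 =
      (v : Matrix (Fin 2) (Fin 2) ℚ_[2]) 1 0 * (v' : Matrix (Fin 2) (Fin 2) ℚ_[2]) 0 1 +
      (v : Matrix (Fin 2) (Fin 2) ℚ_[2]) 1 1 * (v' : Matrix (Fin 2) (Fin 2) ℚ_[2]) 1 1 := by
    simp [Matrix.SpecialLinearGroup.coe_mul, Matrix.mul_apply, Fin.sum_univ_two]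
  unfold kubota
  set M := ((v * v' : Matrix.SpecialLinearGroup (Fin 2) ℚ_[2]) :
    Matrix (Fin 2) (Fin 2) ℚ_[2]) with hMdef
  set A := (v : Matrix (Fin 2) (Fin 2) ℚ_[2]) with hAdef
  set B := (v' : Matrix (Fin 2) (Fin 2) ℚ_[2]) with hBdef
  have key : ∃ x y z : ℚ_[2], (x, y, z) ≠ (0, 0, 0) ∧
      z ^ 2 = (kubotaX 2 M / kubotaX 2 A) * x ^ 2 + (kubotaX 2 M / kubotaX 2 B) * y ^ 2 := by
    by_cases hc : A 1 0 = 0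
    · have hxA : kubotaX 2 A = A 1 1 := by simp [kubotaX, hc]
      by_cases hc' : B 1 0 = 0
      · have hM10 : M 1 0 = 0 := by rw [hc'', hc, hc']; ring
        have hxM : kubotaX 2 M = M 1 1 := by simp [kubotaX, hM10]
        have hxB : kubotaX 2 B = B 1 1 := by simp [kubotaX, hc']
        have hM11 : M 1 1 = A 1 1 * B 1 1 := by rw [hd'', hc]; ring
        refine ⟨1, 0, sd', by simp, ?_⟩
        rw [hxM, hxA, hxB, hM11, hsd']
        field_simp
        ring
      · have hM10 : M 1 0 = A 1 1 * B 1 0 := by rw [hc'', hc]; ring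
        have hM10ne : M 1 0 ≠ 0 := by rw [hM10]; exact mul_ne_zero hd0 hc'
        have hxM : kubotaX 2 M = M 1 0 := by simp [kubotaX, hM10ne]
        have hxB : kubotaX 2 B = B 1 0 := by simp [kubotaX, hc']
        refine ⟨0, 1, sd, by simp, ?_⟩
        rw [hxM, hxA, hxB, hM10, hsd]
        field_simp
        ring
    · have hxA : kubotaX 2 A = A 1 0 := by simp [kubotaX, hc]
      have hsa'ne : sa' ≠ 0 := by
        intro h; apply ha'0; rw [← hsa', h]; ring
      by_cases hc' : B 1 0 = 0
      · have hM10 : M 1 0 = A 1 0 * B 0 0 := by rw [hc'', hc']; ring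
        have hM10ne : M 1 0 ≠ 0 := by rw [hM10]; exact mul_ne_zero hc ha'0
        have hxM : kubotaX 2 M = M 1 0 := by simp [kubotaX, hM10ne]
        refine ⟨1, 0, sa', by simp, ?_⟩
        rw [hxM, hxA, hM10, hsa']
        field_simp
        ring
      · have hxB : kubotaX 2 B = B 1 0 := by simp [kubotaX, hc']
        have hsdne : sd ≠ 0 := by
          intro h; apply hd0; rw [← hsd, h]; ring
        have hxne : A 1 0 * sa' ≠ 0 := mul_ne_zero hc hsa'ne
        by_cases hM : M 1 0 = 0
        · have hxM : kubotaX 2 M = M 1 1 := by simp [kubotaX, hM]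
          have h0 : A 1 0 * B 0 0 + A 1 1 * B 1 0 = 0 := by rw [← hc'']; exact hM
          refine ⟨A 1 0 * sa', B 1 0 * sd, 0, by simp [hxne], ?_⟩
          rw [hxM, hxA, hxB, mul_pow, mul_pow, hsa', hsd]
          have e1 : M 1 1 / A 1 0 * (A 1 0 ^ 2 * B 0 0) = M 1 1 * (A 1 0 * B 0 0) := by
            field_simp
          have e2 : M 1 1 / B 1 0 * (B 1 0 ^ 2 * A 1 1) = M 1 1 * (A 1 1 * B 1 0) := by
            field_simp
          rw [e1, e2]
          linear_combination (-(M 1 1)) * h0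
        · have hxM : kubotaX 2 M = M 1 0 := by simp [kubotaX, hM]
          refine ⟨A 1 0 * sa', B 1 0 * sd, M 1 0, by simp [hxne], ?_⟩
          rw [hxM, hxA, hxB, mul_pow, mul_pow, hsa', hsd]
          have e1 : M 1 0 / A 1 0 * (A 1 0 ^ 2 * B 0 0) = M 1 0 * (A 1 0 * B 0 0) := by
            field_simp
          have e2 : M 1 0 / B 1 0 * (B 1 0 ^ 2 * A 1 1) = M 1 0 * (A 1 1 * B 1 0) := by
            field_simp
          rw [e1, e2]
          linear_combination M 1 0 * hc''
  unfold hilbertSym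
  rw [if_pos key]
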